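/- Let χ* be a primitive Dirichlet character modulo c*, let c be a positive multiple of c*, and let χ be the Dirichlet character modulo c induced by χ*. Then for every positive integer a, g(χ*, c, a) = τ(χ*) · ∑_{d | gcd(a, c/c*)} d · χ*(c/(c*d)) · conj(χ*)(a/d) · μ(c/(c*d)). -/

import Mathlib

open scoped BigOperators

noncomputable def eC (x : ℝ) : ℂ := Complex.exp (2 * Real.pi * Complex.I * x)

/-- Gauss sum of the character modulo `c` induced by `χs` (defined modulo `cs`, with `cs ∣ c`). -/
noncomputable def gSum {cs : ℕ} (χs : DirichletCharacter ℂ cs) (c : ℕ) (m : ℤ) : ℂ :=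
  ∑ u ∈ (Finset.range c).filter fun u => Nat.Coprime u c,
    χs ((u : ℕ) : ZMod cs) * eC ((m : ℝ) * (u : ℝ) / (c : ℝ))

lemma eC_int_div {N : ℕ} [NeZero N] (j : ℤ) :
    eC ((j : ℝ) / (N : ℝ)) = ZMod.stdAddChar ((j : ZMod N)) := by
  rw [ZMod.stdAddChar_coe, eC]
  push_cast
  ring_nf

lemma gSum_eq_sum_range {N : ℕ} (χ : DirichletCharacter ℂ N) (m : ℤ) :
    gSum χ N m = ∑ u ∈ Finset.range N, χ ((u : ℕ) : ZMod N) * eC ((m : ℝ) * u / N) := by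
  rw [gSum]
  refine Finset.sum_subset (Finset.filter_subset _ _) fun u _ hu => ?_
  rw [Finset.mem_filter, not_and] at hu
  have : ¬ IsUnit ((u : ℕ) : ZMod N) := by
    rw [ZMod.isUnit_iff_coprime]
    exact hu ‹u ∈ Finset.range N›
  rw [χ.map_nonunit this, zero_mul]

lemma gSum_eq_gaussSum {N : ℕ} [NeZero N] (χ : DirichletCharacter ℂ N) (m : ℤ) :
    gSum χ N m = gaussSum χ ((ZMod.stdAddChar (N := N)).mulShift (m : ZMod N)) := by
  rw [gSum_eq_sum_range, gaussSum]
  refine Finset.sum_nbij' (fun u => ((u : ℕ) : ZMod N)) (fun v => v.val) ?_ ?_ ?_ ?_ ?_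
  · intro u _; exact Finset.mem_univ _
  · intro v _; exact Finset.mem_range.mpr (ZMod.val_lt v)
  · intro u hu; exact ZMod.val_natCast_of_lt (Finset.mem_range.mp hu)
  · intro v _; exact ZMod.natCast_zmod_val v
  · intro u _
    congr 1
    rw [AddChar.mulShift_apply]
    have : (m : ℝ) * u / N = ((m * u : ℤ) : ℝ) / N := by push_cast; ring
    rw [this, eC_int_div]
    congr 1
    push_cast
    ring

lemma gSum_prim {N : ℕ} [NeZero N] {χ : DirichletCharacter ℂ N} (hχ : χ.IsPrimitive) (b : ℤ) :
    gSum χ N b = (starRingEnd ℂ) (χ ((b : ZMod N))) * gSum χ N 1 := by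
  rw [gSum_eq_gaussSum, gSum_eq_gaussSum, gaussSum_mulShift_of_isPrimitive _ hχ]
  rw [Int.cast_one, AddChar.mulShift_one]
  congr 1
  rw [starRingEnd_apply, MulChar.star_apply']

lemma sum_eC_geom {m : ℕ} (hm : 0 < m) (a : ℕ) :
    ∑ t ∈ Finset.range m, eC ((a : ℝ) * t / m) = if m ∣ a then (m : ℂ) else 0 := by
  haveI : NeZero m := ⟨hm.ne'⟩
  have h : ∀ t ∈ Finset.range m, eC ((a : ℝ) * t / m)
      = ZMod.stdAddChar (((t : ℕ) : ZMod m) * ((a : ℕ) : ZMod m)) := by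
    intro t _
    have : (a : ℝ) * t / m = ((a * t : ℤ) : ℝ) / m := by push_cast; ring
    rw [this, eC_int_div]
    congr 1
    push_cast
    ring
  rw [Finset.sum_congr rfl h]
  have hb : ∑ t ∈ Finset.range m, ZMod.stdAddChar (((t : ℕ) : ZMod m) * ((a : ℕ) : ZMod m))
      = ∑ x : ZMod m, ZMod.stdAddChar (x * ((a : ℕ) : ZMod m)) := by
    refine Finset.sum_nbij' (fun u => ((u : ℕ) : ZMod m)) (fun v => v.val) ?_ ?_ ?_ ?_ ?_
    · intro u _; exact Finset.mem_univ _
    · intro v _; exact Finset.mem_range.mpr (ZMod.val_lt v)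
    · intro u hu; exact ZMod.val_natCast_of_lt (Finset.mem_range.mp hu)
    · intro v _; exact ZMod.natCast_zmod_val v
    · intro u _; rfl
  rw [hb, AddChar.sum_mulShift _ (ZMod.isPrimitive_stdAddChar m)]
  have : ((a : ℕ) : ZMod m) = 0 ↔ m ∣ a := ZMod.natCast_eq_zero_iff a m
  split_ifs with h1 h2 h2
  · rw [ZMod.card]
  · exact absurd (this.mp h1) h2
  · exact absurd (this.mpr h2) h1
  · exact Nat.cast_zero

lemma eC_add (x y : ℝ) : eC (x + y) = eC x * eC y := by
  rw [eC, eC, eC, ← Complex.exp_add]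
  congr 1
  push_cast
  ring

lemma sum_block {cs : ℕ} [NeZero cs] {χ : DirichletCharacter ℂ cs} (hχ : χ.IsPrimitive)
    {m : ℕ} (hm : 0 < m) (a : ℕ) :
    ∑ v ∈ Finset.range (cs * m), χ ((v : ℕ) : ZMod cs) * eC ((a : ℝ) * v / (cs * m)) =
      if m ∣ a then
        (m : ℂ) * ((starRingEnd ℂ) (χ (((a / m : ℕ) : ZMod cs))) * gSum χ cs 1) else 0 := by
  have hcs : 0 < cs := Nat.pos_of_ne_zero (NeZero.ne cs)
  have key : ∀ w t : ℕ, w < cs → t < m →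
      χ (((w + cs * t : ℕ)) : ZMod cs) * eC ((a : ℝ) * (w + cs * t : ℕ) / (cs * m))
      = (χ ((w : ℕ) : ZMod cs) * eC ((a : ℝ) * w / (cs * m))) * eC ((a : ℝ) * t / m) := by
    intro w t hw ht
    have h1 : (((w + cs * t : ℕ)) : ZMod cs) = ((w : ℕ) : ZMod cs) := by
      push_cast
      rw [ZMod.natCast_self]
      ring
    have h2 : (a : ℝ) * (w + cs * t : ℕ) / (cs * m) = (a : ℝ) * w / (cs * m) + (a : ℝ) * t / m := by
      have hcs' : (cs : ℝ) ≠ 0 := Nat.cast_ne_zero.mpr hcs.ne'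
      have hm' : (m : ℝ) ≠ 0 := Nat.cast_ne_zero.mpr hm.ne'
      push_cast
      field_simp
    rw [h1, h2, eC_add]
    ring
  have step : ∑ v ∈ Finset.range (cs * m), χ ((v : ℕ) : ZMod cs) * eC ((a : ℝ) * v / (cs * m))
      = ∑ p ∈ Finset.range m ×ˢ Finset.range cs,
          (χ ((p.2 : ℕ) : ZMod cs) * eC ((a : ℝ) * p.2 / (cs * m))) * eC ((a : ℝ) * p.1 / m) := by
    refine Finset.sum_nbij' (fun v => (v / cs, v % cs)) (fun p => p.2 + cs * p.1) ?_ ?_ ?_ ?_ ?_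
    · intro v hv
      rw [Finset.mem_range] at hv
      rw [Finset.mem_product, Finset.mem_range, Finset.mem_range]
      exact ⟨(Nat.div_lt_iff_lt_mul hcs).mpr (by rwa [mul_comm] at hv), Nat.mod_lt _ hcs⟩
    · intro p hp
      rw [Finset.mem_product, Finset.mem_range, Finset.mem_range] at hp
      rw [Finset.mem_range]
      calc p.2 + cs * p.1 < cs + cs * p.1 := by omega
        _ = cs * (p.1 + 1) := by ring
        _ ≤ cs * m := Nat.mul_le_mul_left _ hp.1
    · intro v _
      simp only
      exact Nat.mod_add_div v cs
    · intro p hp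
      rw [Finset.mem_product, Finset.mem_range, Finset.mem_range] at hp
      have h1 : (p.2 + cs * p.1) / cs = p.1 := by
        rw [Nat.add_mul_div_left _ _ hcs, Nat.div_eq_of_lt hp.2, zero_add]
      have h2 : (p.2 + cs * p.1) % cs = p.2 := by
        rw [Nat.add_mul_mod_self_left, Nat.mod_eq_of_lt hp.2]
      simp [h1, h2]
    · intro v hv
      rw [Finset.mem_range] at hv
      have hmod : v % cs < cs := Nat.mod_lt _ hcs
      have hdiv : v / cs < m := (Nat.div_lt_iff_lt_mul hcs).mpr (by rwa [mul_comm] at hv)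
      have := key (v % cs) (v / cs) hmod hdiv
      rw [Nat.mod_add_div v cs] at this
      exact this
  rw [step, Finset.sum_product, Finset.sum_comm]
  dsimp only
  rw [← Finset.sum_mul_sum]
  rw [sum_eC_geom hm a]
  by_cases hma : m ∣ a
  · rw [if_pos hma, if_pos hma]
    have harg : ∀ w : ℕ, (a : ℝ) * w / (cs * m) = (((a / m : ℕ) : ℤ) : ℝ) * w / cs := by
      intro w
      have hm' : (m : ℝ) ≠ 0 := Nat.cast_ne_zero.mpr hm.ne'
      have hcast : ((a / m : ℕ) : ℝ) = (a : ℝ) / m := Nat.cast_div hma hm'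
      have hcast2 : (((a / m : ℕ) : ℤ) : ℝ) = (a : ℝ) / m := by rw [Int.cast_natCast, hcast]
      rw [hcast2, div_mul_eq_mul_div, div_div, mul_comm (m:ℝ) (cs:ℝ)]
    have : ∑ w ∈ Finset.range cs, χ ((w : ℕ) : ZMod cs) * eC ((a : ℝ) * w / (cs * m))
        = gSum χ cs ((a / m : ℕ) : ℤ) := by
      rw [gSum_eq_sum_range]
      exact Finset.sum_congr rfl fun w _ => by rw [harg w]
    rw [this, gSum_prim hχ, Int.cast_natCast]
    ring
  · rw [if_neg hma, if_neg hma, mul_zero]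

lemma moebius_filter (c : ℕ) (hc : 0 < c) (F : ℕ → ℂ) :
    ∑ u ∈ (Finset.range c).filter (fun u => Nat.Coprime u c), F u
      = ∑ e ∈ c.divisors, ((ArithmeticFunction.moebius e : ℤ) : ℂ) *
          ∑ v ∈ Finset.range (c / e), F (e * v) := by
  have hmu : ∀ u : ℕ, (if Nat.Coprime u c then F u else 0)
      = ∑ e ∈ (Nat.gcd u c).divisors, ((ArithmeticFunction.moebius e : ℤ) : ℂ) * F u := by
    intro u
    have hgcd : 0 < Nat.gcd u c := Nat.gcd_pos_of_pos_right u hc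
    have hs : ∑ e ∈ (Nat.gcd u c).divisors, (ArithmeticFunction.moebius e : ℤ)
        = if Nat.gcd u c = 1 then 1 else 0 := by
      have h1 := congrArg (fun f => f (Nat.gcd u c)) ArithmeticFunction.moebius_mul_coe_zeta
      simp only [ArithmeticFunction.coe_mul_zeta_apply, ArithmeticFunction.one_apply] at h1
      exact h1
    rw [← Finset.sum_mul]
    have : (∑ e ∈ (Nat.gcd u c).divisors, ((ArithmeticFunction.moebius e : ℤ) : ℂ))
        = ((∑ e ∈ (Nat.gcd u c).divisors, (ArithmeticFunction.moebius e : ℤ) : ℤ) : ℂ) := by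
      push_cast; rfl
    rw [this, hs]
    unfold Nat.Coprime
    split_ifs <;> simp
  rw [Finset.sum_filter, Finset.sum_congr rfl fun u _ => hmu u]
  have hdiv : ∀ u : ℕ, (Nat.gcd u c).divisors = c.divisors.filter (fun e => e ∣ u) := by
    intro u
    ext e
    have hg : Nat.gcd u c ≠ 0 := (Nat.gcd_pos_of_pos_right u hc).ne'
    simp only [Nat.mem_divisors, Finset.mem_filter, Nat.dvd_gcd_iff, hg, hc.ne', ne_eq,
      not_false_eq_true, and_true]
    tauto
  rw [Finset.sum_congr rfl fun u _ => by rw [hdiv u, Finset.sum_filter]]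
  rw [Finset.sum_comm]
  refine Finset.sum_congr rfl fun e he => ?_
  rw [← Finset.sum_filter, Finset.mul_sum]
  obtain ⟨hec, hc0⟩ := Nat.mem_divisors.mp he
  have hepos : 0 < e := Nat.pos_of_ne_zero fun h => hc0 (by simpa [h] using hec)
  refine Finset.sum_nbij' (fun u => u / e) (fun v => e * v) ?_ ?_ ?_ ?_ ?_
  · intro u hu
    rw [Finset.mem_filter, Finset.mem_range] at hu
    rw [Finset.mem_range, Nat.lt_div_iff_mul_lt' hec, Nat.mul_div_cancel' hu.2]
    exact hu.1
  · intro v hv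
    rw [Finset.mem_range] at hv
    rw [Finset.mem_filter, Finset.mem_range]
    exact ⟨(Nat.lt_div_iff_mul_lt' hec v).mp hv, dvd_mul_right e v⟩
  · intro u hu
    rw [Finset.mem_filter] at hu
    exact Nat.mul_div_cancel' hu.2
  · intro v _
    exact Nat.mul_div_cancel_left v hepos
  · intro u hu
    rw [Finset.mem_filter] at hu
    rw [Nat.mul_div_cancel' hu.2]

/-- Gauss sums of non-primitive characters (Miyake, Lemma 3.1.3.(2)):
`g(χ*, c, a) = τ(χ*) ∑_{d | (a, c/c*)} d χ*(c/(c*d)) conj(χ*)(a/d) μ(c/(c*d))`. -/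
theorem gauss_sum_induced {cs : ℕ} (hcs : 0 < cs) (χs : DirichletCharacter ℂ cs)
    (hprim : χs.IsPrimitive) {c : ℕ} (hc : 0 < c) (hdvd : cs ∣ c)
    (a : ℕ) (ha : 0 < a) :
    gSum χs c (a : ℤ) =
      gSum χs cs 1 *
        ∑ d ∈ (Nat.gcd a (c / cs)).divisors,
          (d : ℂ) * χs ((c / (cs * d) : ℕ) : ZMod cs) *
            (starRingEnd ℂ) (χs ((a / d : ℕ) : ZMod cs)) *
            ((ArithmeticFunction.moebius (c / (cs * d)) : ℤ) : ℂ) := by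
  haveI : NeZero cs := ⟨hcs.ne'⟩
  obtain ⟨n, hn⟩ := hdvd
  have hnpos : 0 < n := by
    rcases Nat.eq_zero_or_pos n with h | h
    · subst h; simp [hn] at hc
    · exact h
  have hncs : c / cs = n := by rw [hn]; exact Nat.mul_div_cancel_left n hcs
  have hndvd : n ∣ c := ⟨cs, by rw [hn]; ring⟩
  rw [gSum, moebius_filter c hc]
  simp only [Int.cast_natCast]
  -- restrict from c.divisors to n.divisors
  have hsub : n.divisors ⊆ c.divisors := Nat.divisors_subset_of_dvd hc.ne' hndvd
  rw [← Finset.sum_subset hsub ?hzero]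
  case hzero =>
    intro e he hne
    have hec : e ∣ c := (Nat.mem_divisors.mp he).1
    have hchi : χs ((e : ℕ) : ZMod cs) = 0 := by
      refine χs.map_nonunit ?_
      rw [ZMod.isUnit_iff_coprime]
      intro hcop
      exact hne (Nat.mem_divisors.mpr ⟨hcop.dvd_of_dvd_mul_left (hn ▸ hec), hnpos.ne'⟩)
    have : ∀ v : ℕ, χs ((e * v : ℕ) : ZMod cs) * eC ((a : ℝ) * ((e * v : ℕ) : ℝ) / c) = 0 := by
      intro v
      have : ((e * v : ℕ) : ZMod cs) = ((e : ℕ) : ZMod cs) * ((v : ℕ) : ZMod cs) := by push_cast; ring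
      rw [this, map_mul, hchi, zero_mul, zero_mul]
    rw [Finset.sum_congr rfl fun v _ => this v, Finset.sum_const_zero, mul_zero]
  -- evaluate the inner sums for e ∣ n
  have hstep3 : ∀ e ∈ n.divisors,
      ((ArithmeticFunction.moebius e : ℤ) : ℂ) *
        ∑ v ∈ Finset.range (c / e), χs ((e * v : ℕ) : ZMod cs) * eC ((a : ℝ) * ((e * v : ℕ) : ℝ) / c)
      = ((ArithmeticFunction.moebius e : ℤ) : ℂ) * (χs ((e : ℕ) : ZMod cs) *
          (if (n / e) ∣ a then ((n / e : ℕ) : ℂ) *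
            ((starRingEnd ℂ) (χs ((a / (n / e) : ℕ) : ZMod cs)) * gSum χs cs 1) else 0)) := by
    intro e he
    obtain ⟨hen, _⟩ := Nat.mem_divisors.mp he
    have hepos : 0 < e := Nat.pos_of_ne_zero fun h => hnpos.ne' (by simpa [h] using hen)
    have hme : 0 < n / e := Nat.div_pos (Nat.le_of_dvd hnpos hen) hepos
    have hcM : c = e * (cs * (n / e)) := by
      conv_lhs => rw [hn, ← Nat.mul_div_cancel' hen]
      ring
    have hce : c / e = cs * (n / e) := by rw [hcM, Nat.mul_div_cancel_left _ hepos]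
    congr 1
    rw [hce]
    have hterm : ∀ v : ℕ, χs ((e * v : ℕ) : ZMod cs) * eC ((a : ℝ) * ((e * v : ℕ) : ℝ) / c)
        = χs ((e : ℕ) : ZMod cs) * (χs ((v : ℕ) : ZMod cs) *
            eC ((a : ℝ) * v / ((cs : ℝ) * ((n / e : ℕ) : ℝ)))) := by
      intro v
      have h1 : ((e * v : ℕ) : ZMod cs) = ((e : ℕ) : ZMod cs) * ((v : ℕ) : ZMod cs) := by
        push_cast; ring
      have h2 : (a : ℝ) * ((e * v : ℕ) : ℝ) / c = (a : ℝ) * v / ((cs : ℝ) * ((n / e : ℕ) : ℝ)) := by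
        rw [hcM]
        have he' : (e : ℝ) ≠ 0 := Nat.cast_ne_zero.mpr hepos.ne'
        push_cast
        rw [show (a : ℝ) * ((e : ℝ) * v) = (e : ℝ) * ((a : ℝ) * v) by ring,
          mul_div_mul_left _ _ he']
      rw [h1, map_mul, h2, mul_assoc]
    rw [Finset.sum_congr rfl fun v _ => hterm v, ← Finset.mul_sum,
      sum_block hprim hme a]
  rw [Finset.sum_congr rfl hstep3]
  -- reindex e ↦ n / e
  have hstep4 : ∀ e ∈ n.divisors,
      ((ArithmeticFunction.moebius e : ℤ) : ℂ) * (χs ((e : ℕ) : ZMod cs) *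
          (if (n / e) ∣ a then ((n / e : ℕ) : ℂ) *
            ((starRingEnd ℂ) (χs ((a / (n / e) : ℕ) : ZMod cs)) * gSum χs cs 1) else 0))
      = (fun k => ((ArithmeticFunction.moebius (n / k) : ℤ) : ℂ) * (χs ((n / k : ℕ) : ZMod cs) *
          (if k ∣ a then ((k : ℕ) : ℂ) *
            ((starRingEnd ℂ) (χs ((a / k : ℕ) : ZMod cs)) * gSum χs cs 1) else 0))) (n / e) := by
    intro e he
    obtain ⟨hen, _⟩ := Nat.mem_divisors.mp he
    simp only [Nat.div_div_self hen hnpos.ne']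
  rw [Finset.sum_congr rfl hstep4]
  refine (Nat.sum_div_divisors (α := ℂ) n
    (fun k => ((ArithmeticFunction.moebius (n / k) : ℤ) : ℂ) * (χs ((n / k : ℕ) : ZMod cs) *
      (if k ∣ a then ((k : ℕ) : ℂ) *
        ((starRingEnd ℂ) (χs ((a / k : ℕ) : ZMod cs)) * gSum χs cs 1) else 0)))).trans ?_
  -- turn ite-sum into sum over divisors of gcd
  simp only [mul_ite, mul_zero]
  rw [← Finset.sum_filter]
  have hfil : n.divisors.filter (fun k => k ∣ a) = (Nat.gcd a n).divisors := by
    ext k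
    have hg : Nat.gcd a n ≠ 0 := (Nat.gcd_pos_of_pos_right a hnpos).ne'
    simp only [Finset.mem_filter, Nat.mem_divisors, Nat.dvd_gcd_iff, hg, hnpos.ne', ne_eq,
      not_false_eq_true, and_true]
    tauto
  rw [hfil, hncs, Finset.mul_sum]
  refine Finset.sum_congr rfl fun d hd => ?_
  have hrw : c / (cs * d) = n / d := by rw [← Nat.div_div_eq_div_mul, hncs]
  rw [hrw]
  ring
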